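/- Let (X,f) be a dynamical system with X a compact metric space and f : X → X continuous. Assume f admits an invariant Borel probability measure with full support. If f has the average shadowing property, then f is topologically weakly mixing. -/

import Mathlib

open Filter Metric Set MeasureTheory Topology

section Defs

variable {X : Type*} [MetricSpace X]

/-- The Bowen ball of radius `ε` centered at `x` along a finite set of times `Λ`. -/
def bowenBallAlong (f : X → X) (Λ : Finset ℕ) (x : X) (ε : ℝ) : Set X :=
  {y | ∀ j ∈ Λ, dist (f^[j] x) (f^[j] y) < ε}

/-- `g` is a mistake function with threshold `ε₀`. -/
structure IsMistakeFun (g : ℕ → ℝ → ℕ) (ε₀ : ℝ) : Prop where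
  pos : 0 < ε₀
  mono : ∀ n : ℕ, ∀ ε : ℝ, 0 < ε → ε ≤ ε₀ → g n ε ≤ g (n + 1) ε
  small : ∀ ε : ℝ, 0 < ε → ε ≤ ε₀ →
    Tendsto (fun n : ℕ => (g n ε : ℝ) / n) atTop (nhds 0)
  ext : ∀ n : ℕ, ∀ ε : ℝ, ε₀ < ε → g n ε = g n ε₀

/-- The `(g;n,ε)`-Bowen ball `B_n(g;x,ε)`: union of Bowen balls along all
`Λ ⊆ {0,…,n-1}` with `#Λ ≥ n - g(n,ε)`. -/
def mistakeBowenBall (f : X → X) (g : ℕ → ℝ → ℕ) (n : ℕ) (x : X) (ε : ℝ) : Set X :=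
  ⋃ Λ ∈ {Λ : Finset ℕ | Λ ⊆ Finset.range n ∧ n - g n ε ≤ Λ.card},
    bowenBallAlong f Λ x ε

/-- Almost specification property with given mistake function `g` and gap function `kg`. -/
def AlmostSpecWith (f : X → X) (g : ℕ → ℝ → ℕ) (kg : ℝ → ℕ) : Prop :=
  ∀ m : ℕ, 1 ≤ m → ∀ (ε : ℕ → ℝ) (x : ℕ → X) (nseq : ℕ → ℕ),
    (∀ j, 1 ≤ j → j ≤ m → 0 < ε j) →
    (∀ j, 1 ≤ j → j ≤ m → kg (ε j) ≤ nseq j) →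
    ∃ z : X, ∀ j, 1 ≤ j → j ≤ m →
      f^[∑ s ∈ Finset.Ico 1 j, nseq s] z ∈ mistakeBowenBall f g (nseq j) (x j) (ε j)

/-- The almost specification property. -/
def AlmostSpec (f : X → X) : Prop :=
  ∃ (g : ℕ → ℝ → ℕ) (ε₀ : ℝ) (kg : ℝ → ℕ),
    IsMistakeFun g ε₀ ∧ AlmostSpecWith f g kg

/-- `{x_n}` is a `δ`-average-pseudo-orbit of `f`. -/
def AvgPseudoOrbit (f : X → X) (δ : ℝ) (x : ℕ → X) : Prop :=
  ∃ N : ℕ, 0 < N ∧ ∀ n : ℕ, N ≤ n → ∀ k : ℕ,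
    (∑ i ∈ Finset.range n, dist (f (x (i + k))) (x (i + k + 1))) / n < δ

/-- `{x_n}` is `ε`-shadowed in average by `y`. -/
def ShadowedInAvg (f : X → X) (ε : ℝ) (x : ℕ → X) (y : X) : Prop :=
  limsup (fun n : ℕ => (∑ i ∈ Finset.range n, dist (f^[i] y) (x i)) / n) atTop < ε

/-- The average shadowing property. -/
def AvgShadowing (f : X → X) : Prop :=
  ∀ ε : ℝ, 0 < ε → ∃ δ : ℝ, 0 < δ ∧
    ∀ x : ℕ → X, AvgPseudoOrbit f δ x → ∃ y : X, ShadowedInAvg f ε x y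

/-- `{x_n}` is an asymptotic average pseudo-orbit of `f`. -/
def AsympAvgPseudoOrbit (f : X → X) (x : ℕ → X) : Prop :=
  Tendsto (fun n : ℕ => (∑ i ∈ Finset.range n, dist (f (x i)) (x (i + 1))) / n)
    atTop (nhds 0)

/-- `{x_n}` is asymptotically shadowed in average by `y`. -/
def AsympShadowedInAvg (f : X → X) (x : ℕ → X) (y : X) : Prop :=
  Tendsto (fun n : ℕ => (∑ i ∈ Finset.range n, dist (f^[i] y) (x i)) / n)
    atTop (nhds 0)

/-- The asymptotic average shadowing property. -/
def AsympAvgShadowing (f : X → X) : Prop :=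
  ∀ x : ℕ → X, AsympAvgPseudoOrbit f x → ∃ y : X, AsympShadowedInAvg f x y

/-- An infinite `δ`-pseudo-orbit. -/
def PseudoOrbit (f : X → X) (δ : ℝ) (x : ℕ → X) : Prop :=
  ∀ i : ℕ, dist (f (x i)) (x (i + 1)) < δ

/-- There exists a finite `δ`-pseudo-orbit of length `n` from `x` to `y`. -/
def FinChain (f : X → X) (δ : ℝ) (n : ℕ) (x y : X) : Prop :=
  ∃ c : ℕ → X, c 0 = x ∧ c n = y ∧ ∀ i < n, dist (f (c i)) (c (i + 1)) < δ

/-- Chain transitivity. -/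
def ChainTransitive (f : X → X) : Prop :=
  ∀ δ : ℝ, 0 < δ → ∀ x y : X, ∃ n : ℕ, 0 < n ∧ FinChain f δ n x y

/-- Chain mixing. -/
def ChainMixing (f : X → X) : Prop :=
  ∀ δ : ℝ, 0 < δ → ∀ x y : X, ∃ N : ℕ, 0 < N ∧ ∀ n : ℕ, N ≤ n → FinChain f δ n x y

/-- The shadowing property. -/
def Shadowing (f : X → X) : Prop :=
  ∀ ε : ℝ, 0 < ε → ∃ δ : ℝ, 0 < δ ∧
    ∀ x : ℕ → X, PseudoOrbit f δ x → ∃ z : X, ∀ i : ℕ, dist (f^[i] z) (x i) < ε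

/-- The limit shadowing property. -/
def LimitShadowing (f : X → X) : Prop :=
  ∀ x : ℕ → X, Tendsto (fun i : ℕ => dist (f (x i)) (x (i + 1))) atTop (nhds 0) →
    ∃ z : X, Tendsto (fun i : ℕ => dist (f^[i] z) (x i)) atTop (nhds 0)

/-- Topological transitivity. -/
def TopTransitive {Y : Type*} [TopologicalSpace Y] (f : Y → Y) : Prop :=
  ∀ U V : Set Y, IsOpen U → IsOpen V → U.Nonempty → V.Nonempty →
    ∃ n : ℕ, 0 < n ∧ (f^[n] '' U ∩ V).Nonempty

/-- Total transitivity. -/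
def TotallyTransitive {Y : Type*} [TopologicalSpace Y] (f : Y → Y) : Prop :=
  ∀ n : ℕ, 1 ≤ n → TopTransitive f^[n]

/-- Topological weak mixing: `f × f` is transitive. -/
def WeaklyMixing {Y : Type*} [TopologicalSpace Y] (f : Y → Y) : Prop :=
  TopTransitive (Prod.map f f)

/-- Topological mixing. -/
def TopMixing {Y : Type*} [TopologicalSpace Y] (f : Y → Y) : Prop :=
  ∀ U V : Set Y, IsOpen U → IsOpen V → U.Nonempty → V.Nonempty →
    ∃ N : ℕ, 0 < N ∧ ∀ n : ℕ, N ≤ n → (f^[n] '' U ∩ V).Nonempty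

/-- The forward orbit of a point. -/
def fOrbit (f : X → X) (x : X) : Set X := Set.range fun n : ℕ => f^[n] x

/-- `x` is a minimal point of `f`: every point of the orbit closure of `x`
has orbit dense in that orbit closure. -/
def MinimalPoint (f : X → X) (x : X) : Prop :=
  ∀ y ∈ closure (fOrbit f x), closure (fOrbit f x) ⊆ closure (fOrbit f y)

variable [MeasurableSpace X]

/-- `μ` is an `f`-invariant Borel probability measure. -/
def InvariantProb (f : X → X) (μ : Measure X) : Prop :=
  IsProbabilityMeasure μ ∧ ∀ B : Set X, MeasurableSet B → μ (f ⁻¹' B) = μ B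

/-- A set is universally null if it has measure zero for every invariant
probability measure. -/
def UnivNull (f : X → X) (U : Set X) : Prop :=
  ∀ μ : Measure X, InvariantProb f μ → μ U = 0

/-- The measure center: complement of the union of all universally null open sets. -/
def measureCenter (f : X → X) : Set X :=
  (⋃ U ∈ {U : Set X | IsOpen U ∧ UnivNull f U}, U)ᶜ

/-- `μ` has full support. -/
def FullSupport (μ : Measure X) : Prop :=
  ∀ U : Set X, IsOpen U → U.Nonempty → 0 < μ U

end Defs

section Visits

variable {X : Type*} [MetricSpace X]

/-- The set of visiting times `N(x,U)`. -/
def visitTimes (f : X → X) (x : X) (U : Set X) : Set ℕ :=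
  {n : ℕ | 0 < n ∧ f^[n] x ∈ U}

/-- `η(n,U) = max_{x ∈ X} #(N(x,U) ∩ {0,…,n-1})`. -/
noncomputable def eta (f : X → X) (U : Set X) (n : ℕ) : ℕ :=
  sSup {k : ℕ | ∃ x : X, k = (visitTimes f x U ∩ Set.Iio n).ncard}

/-- The visit frequency `ξ(U) = inf_{n>0} η(n,U)/n`. -/
noncomputable def xi (f : X → X) (U : Set X) : ℝ :=
  ⨅ n : ℕ, (eta f U (n + 1) : ℝ) / (n + 1)

/-- `J ⊆ ℕ` has asymptotic density `a`. -/
def HasDensity (J : Set ℕ) (a : ℝ) : Prop :=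
  Tendsto (fun n : ℕ => ((J ∩ Set.Iio n).ncard : ℝ) / n) atTop (nhds a)

/-- Upper asymptotic density of a set of naturals. -/
noncomputable def upperDensity (J : Set ℕ) : ℝ :=
  limsup (fun n : ℕ => ((J ∩ Set.Iio n).ncard : ℝ) / n) atTop

end Visits


/- ===== Auxiliary lemmas ===== -/

section Aux

variable {Y : Type*} [MetricSpace Y]

omit [MetricSpace Y] in
lemma iter_invariant' {Y : Type*} [MeasurableSpace Y] [TopologicalSpace Y] [BorelSpace Y]
    (f : Y → Y) (hf : Continuous f) (μ : Measure Y)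
    (hinv : ∀ B : Set Y, MeasurableSet B → μ (f ⁻¹' B) = μ B)
    {W : Set Y} (hW : MeasurableSet W) (t : ℕ) : μ ((f^[t]) ⁻¹' W) = μ W := by
  induction t with
  | zero => simp
  | succ t ih =>
      rw [Function.iterate_succ, Set.preimage_comp,
        hinv _ (hW.preimage (hf.measurable.iterate t)), ih]

open scoped Classical in
omit [MetricSpace Y] in
lemma exists_good_point' {Y : Type*} [MeasurableSpace Y] [TopologicalSpace Y] [BorelSpace Y]
    (f : Y → Y) (hf : Continuous f) (μ : Measure Y)
    [IsProbabilityMeasure μ]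
    (hinv : ∀ B : Set Y, MeasurableSet B → μ (f ⁻¹' B) = μ B)
    {W : Set Y} (hW : MeasurableSet W) (n : ℕ) :
    ∃ p : Y, (n : ℝ) * (μ W).toReal - 1 ≤
      ((Finset.range n).filter (fun t => f^[t] p ∈ W)).card := by
  by_contra hcon
  push_neg at hcon
  set S : Y → ℝ := fun p => ((Finset.range n).filter (fun t => f^[t] p ∈ W)).card with hS
  have hSsum : ∀ p, S p = ∑ t ∈ Finset.range n, (W.indicator (fun _ => (1:ℝ)) (f^[t] p)) := by
    intro p
    rw [hS]
    simp only [Finset.card_filter]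
    push_cast
    refine Finset.sum_congr rfl fun t _ => ?_
    by_cases hm : f^[t] p ∈ W <;> simp [Set.indicator_apply, hm]
  have hint : ∀ t : ℕ, Integrable (fun p => W.indicator (fun _ => (1:ℝ)) (f^[t] p)) μ := by
    intro t
    have : (fun p => W.indicator (fun _ => (1:ℝ)) (f^[t] p))
        = ((f^[t]) ⁻¹' W).indicator (fun _ => (1:ℝ)) := by
      ext p; by_cases hm : f^[t] p ∈ W <;> simp [Set.indicator_apply, hm]
    rw [this]
    exact (integrable_indicator_iff (hW.preimage (hf.measurable.iterate t))).2
      (integrableOn_const (measure_ne_top _ _))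
  have hSint : Integrable S μ := by
    have : Integrable (fun p => ∑ t ∈ Finset.range n, (W.indicator (fun _ => (1:ℝ)) (f^[t] p))) μ :=
      integrable_finset_sum _ (fun t _ => hint t)
    exact this.congr (Filter.Eventually.of_forall fun p => (hSsum p).symm)
  have hIS : ∫ p, S p ∂μ = (n : ℝ) * (μ W).toReal := by
    calc ∫ p, S p ∂μ = ∫ p, ∑ t ∈ Finset.range n, (W.indicator (fun _ => (1:ℝ)) (f^[t] p)) ∂μ := by
          exact integral_congr_ae (Filter.Eventually.of_forall hSsum)
      _ = ∑ t ∈ Finset.range n, ∫ p, W.indicator (fun _ => (1:ℝ)) (f^[t] p) ∂μ :=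
          integral_finset_sum _ (fun t _ => hint t)
      _ = ∑ t ∈ Finset.range n, (μ ((f^[t]) ⁻¹' W)).toReal := by
          refine Finset.sum_congr rfl fun t _ => ?_
          have : (fun p => W.indicator (fun _ => (1:ℝ)) (f^[t] p))
              = ((f^[t]) ⁻¹' W).indicator (fun _ => (1:ℝ)) := by
            ext p; by_cases hm : f^[t] p ∈ W <;> simp [Set.indicator_apply, hm]
          rw [this]
          exact integral_indicator_one (hW.preimage (hf.measurable.iterate t))
      _ = (n : ℝ) * (μ W).toReal := by
          rw [Finset.sum_congr rfl fun t _ => by rw [iter_invariant' f hf μ hinv hW t]]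
          simp [mul_comm]
  have hle : ∫ p, S p ∂μ ≤ (n : ℝ) * (μ W).toReal - 1 := by
    calc ∫ p, S p ∂μ ≤ ∫ _p, ((n : ℝ) * (μ W).toReal - 1) ∂μ :=
          integral_mono hSint (integrable_const _) (fun p => (hcon p).le)
      _ = (n : ℝ) * (μ W).toReal - 1 := by simp
  rw [hIS] at hle; linarith

/-- the alternating periodic sequence -/
noncomputable def altSeq (f : Y → Y) (n : ℕ) (p q : Y) : ℕ → Y := fun i =>
  if (i / n) % 2 = 0 then f^[i % n] p else f^[i % n] q

omit [MetricSpace Y] in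
lemma altSeq_step (f : Y → Y) (n : ℕ) (p q : Y) (hn : 0 < n) {i : ℕ} (hi : ¬ n ∣ (i + 1)) :
    altSeq f n p q (i + 1) = f (altSeq f n p q i) := by
  have hdm := Nat.div_add_mod i n
  have h1 : i % n + 1 < n := by
    rcases lt_or_eq_of_le (Nat.succ_le_of_lt (Nat.mod_lt i hn)) with h | h
    · exact h
    · exfalso; exact hi ⟨i / n + 1, by rw [Nat.mul_add, mul_one]; omega⟩
  have e1 : i + 1 = n * (i / n) + (i % n + 1) := by omega
  have ediv : (i + 1) / n = i / n := by
    rw [e1, Nat.mul_add_div hn, Nat.div_eq_of_lt h1, add_zero]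
  have emod : (i + 1) % n = i % n + 1 := by
    rw [e1, Nat.mul_add_mod, Nat.mod_eq_of_lt h1]
  unfold altSeq
  rw [ediv, emod]
  split <;> rw [Function.iterate_succ_apply']

omit [MetricSpace Y] in
lemma altSeq_block_even (f : Y → Y) (n : ℕ) (p q : Y) (hn : 0 < n) {j t : ℕ}
    (ht : t < n) (hj : j % 2 = 0) :
    altSeq f n p q (j * n + t) = f^[t] p := by
  have ediv : (j * n + t) / n = j := by
    rw [mul_comm, Nat.mul_add_div hn, Nat.div_eq_of_lt ht, add_zero]
  have emod : (j * n + t) % n = t := by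
    rw [mul_comm, Nat.mul_add_mod, Nat.mod_eq_of_lt ht]
  unfold altSeq
  rw [ediv, emod, if_pos hj]

omit [MetricSpace Y] in
lemma altSeq_block_odd (f : Y → Y) (n : ℕ) (p q : Y) (hn : 0 < n) {j t : ℕ}
    (ht : t < n) (hj : j % 2 = 1) :
    altSeq f n p q (j * n + t) = f^[t] q := by
  have ediv : (j * n + t) / n = j := by
    rw [mul_comm, Nat.mul_add_div hn, Nat.div_eq_of_lt ht, add_zero]
  have emod : (j * n + t) % n = t := by
    rw [mul_comm, Nat.mul_add_mod, Nat.mod_eq_of_lt ht]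
  unfold altSeq
  rw [ediv, emod, if_neg (by omega)]

/-- counting multiples in a window -/
lemma card_dvd_window (n m k : ℕ) (hn : 0 < n) :
    ((Finset.range m).filter (fun i => n ∣ (i + k + 1))).card ≤ m / n + 2 := by
  classical
  have hmap : ∀ i ∈ (Finset.range m).filter (fun i => n ∣ (i + k + 1)),
      (i + k + 1) / n ∈ Finset.Icc ((k + 1)/n) ((k + m)/n) := by
    intro i hi
    simp only [Finset.mem_filter, Finset.mem_range] at hi
    refine Finset.mem_Icc.2 ⟨Nat.div_le_div_right (by omega), Nat.div_le_div_right (by omega)⟩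
  have hinj : Set.InjOn (fun i => (i + k + 1) / n)
      ((Finset.range m).filter (fun i => n ∣ (i + k + 1))) := by
    intro i hi i' hi' he
    simp only [Finset.coe_filter, Set.mem_setOf_eq, Finset.mem_range] at hi hi'
    have h1 : i + k + 1 = n * ((i + k + 1) / n) := (Nat.mul_div_cancel' hi.2).symm
    have h2 : i' + k + 1 = n * ((i' + k + 1) / n) := (Nat.mul_div_cancel' hi'.2).symm
    simp only at he
    rw [he] at h1
    omega
  have := Finset.card_le_card_of_injOn _ hmap hinj
  calc ((Finset.range m).filter (fun i => n ∣ (i + k + 1))).card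
      ≤ (Finset.Icc ((k + 1)/n) ((k + m)/n)).card := this
    _ = (k + m)/n + 1 - (k + 1)/n := by rw [Nat.card_Icc]
    _ ≤ m / n + 2 := by
        have hq : (k + m) / n ≤ (k + 1)/n + m / n + 1 := by
          rcases Nat.eq_zero_or_pos m with hm | hm
          · subst hm
            simp only [Nat.zero_div, add_zero]
            exact (Nat.div_le_div_right (Nat.le_succ k)).trans (Nat.le_succ _)
          · calc (k + m)/n = ((k+1) + (m-1))/n := by congr 1; omega
              _ ≤ (k+1)/n + (m-1)/n + 1 := by rw [Nat.add_div hn]; split <;> simp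
              _ ≤ (k+1)/n + m/n + 1 := by
                  exact Nat.add_le_add_right (Nat.add_le_add_left
                    (Nat.div_le_div_right (show m - 1 ≤ m by omega)) _) 1
        revert hq
        generalize (k+m)/n = A
        generalize (k+1)/n = B
        generalize m/n = C
        omega

open scoped Classical in
lemma altSeq_count_even (f : Y → Y) (n : ℕ) (p q : Y) (hn : 0 < n) (W : Set Y) (k : ℕ) :
    k * ((Finset.range n).filter (fun t => f^[t] p ∈ W)).card ≤
    ((Finset.range (2*k*n)).filter (fun i => altSeq f n p q i ∈ W)).card := by
  have key := Finset.card_le_card_of_injOn (t := (Finset.range (2*k*n)).filter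
      (fun i => altSeq f n p q i ∈ W)) (fun jt => (2 * jt.1) * n + jt.2) ?_ ?_
    (s := (Finset.range k) ×ˢ ((Finset.range n).filter (fun t => f^[t] p ∈ W)))
  · rwa [Finset.card_product, Finset.card_range] at key
  · rintro ⟨j, t⟩ hjt
    change (j, t) ∈ (Finset.range k) ×ˢ ((Finset.range n).filter (fun t => f^[t] p ∈ W)) at hjt
    simp only [Finset.mem_product, Finset.mem_range, Finset.mem_filter, Finset.mem_coe] at hjt ⊢
    obtain ⟨hj, ht, htW⟩ := hjt
    constructor
    · have h1 : (2*j)*n + t < (2*j+1)*n := by rw [add_mul, one_mul]; omega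
      have h2 : (2*j+1)*n ≤ (2*k)*n := Nat.mul_le_mul (by omega) (le_refl n)
      exact lt_of_lt_of_le h1 (h2.trans_eq (by ring))
    · rw [altSeq_block_even f n p q hn ht (by omega)]
      exact htW
  · rintro ⟨j, t⟩ hjt ⟨j', t'⟩ hjt' he
    simp only [Finset.coe_product, Set.mem_prod, Finset.mem_coe, Finset.mem_range,
      Finset.mem_coe, Finset.mem_filter, Finset.coe_filter, Set.mem_setOf_eq] at hjt hjt'
    simp only at he
    have ht : t < n := hjt.2.1
    have ht' : t' < n := hjt'.2.1
    have e1 : (2*n) * j + t = (2*n) * j' + t' := by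
      rw [show (2*n)*j + t = (2*j)*n + t from by ring,
        show (2*n)*j' + t' = (2*j')*n + t' from by ring]
      exact he
    have hj : j = j' := by
      have := congrArg (fun z => z / (2*n)) e1
      simpa [Nat.mul_add_div (by omega : 0 < 2*n), Nat.div_eq_of_lt (by omega : t < 2*n),
        Nat.div_eq_of_lt (by omega : t' < 2*n)] using this
    subst hj
    have : t = t' := by omega
    simp [this]

open scoped Classical in
lemma altSeq_count_odd (f : Y → Y) (n : ℕ) (p q : Y) (hn : 0 < n) (W : Set Y) (k : ℕ) :
    k * ((Finset.range n).filter (fun t => f^[t] q ∈ W)).card ≤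
    ((Finset.range (2*k*n)).filter (fun i => altSeq f n p q i ∈ W)).card := by
  have key := Finset.card_le_card_of_injOn (t := (Finset.range (2*k*n)).filter
      (fun i => altSeq f n p q i ∈ W)) (fun jt => (2 * jt.1 + 1) * n + jt.2) ?_ ?_
    (s := (Finset.range k) ×ˢ ((Finset.range n).filter (fun t => f^[t] q ∈ W)))
  · rwa [Finset.card_product, Finset.card_range] at key
  · rintro ⟨j, t⟩ hjt
    change (j, t) ∈ (Finset.range k) ×ˢ ((Finset.range n).filter (fun t => f^[t] q ∈ W)) at hjt
    simp only [Finset.mem_product, Finset.mem_range, Finset.mem_filter, Finset.mem_coe] at hjt ⊢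
    obtain ⟨hj, ht, htW⟩ := hjt
    constructor
    · have h1 : (2*j+1)*n + t < (2*j+2)*n := by rw [add_mul, add_mul, one_mul]; omega
      have h2 : (2*j+2)*n ≤ (2*k)*n := Nat.mul_le_mul (by omega) (le_refl n)
      exact lt_of_lt_of_le h1 (h2.trans_eq (by ring))
    · rw [altSeq_block_odd f n p q hn ht (by omega)]
      exact htW
  · rintro ⟨j, t⟩ hjt ⟨j', t'⟩ hjt' he
    simp only [Finset.coe_product, Set.mem_prod, Finset.mem_coe, Finset.mem_range,
      Finset.mem_coe, Finset.mem_filter, Finset.coe_filter, Set.mem_setOf_eq] at hjt hjt'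
    simp only at he
    have ht : t < n := hjt.2.1
    have ht' : t' < n := hjt'.2.1
    have e1 : (2*n) * j + (n + t) = (2*n) * j' + (n + t') := by
      rw [show (2*n)*j + (n+t) = (2*j+1)*n + t from by ring,
        show (2*n)*j' + (n+t') = (2*j'+1)*n + t' from by ring]
      exact he
    have hj : j = j' := by
      have := congrArg (fun z => z / (2*n)) e1
      simpa [Nat.mul_add_div (by omega : 0 < 2*n), Nat.div_eq_of_lt (by omega : n + t < 2*n),
        Nat.div_eq_of_lt (by omega : n + t' < 2*n)] using this
    subst hj
    have : t = t' := by omega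
    simp [this]

open scoped Classical in
lemma altSeq_avgPO [CompactSpace Y] (f : Y → Y) (n : ℕ) (p q : Y) (hn : 0 < n)
    {δ : ℝ} (hδ : 0 < δ) (hnδ : 3 * Metric.diam (Set.univ : Set Y) < δ * n) :
    AvgPseudoOrbit f δ (altSeq f n p q) := by
  set D := Metric.diam (Set.univ : Set Y) with hDdef
  have hD0 : 0 ≤ D := Metric.diam_nonneg
  have hD : ∀ a b : Y, dist a b ≤ D := fun a b =>
    Metric.dist_le_diam_of_mem isCompact_univ.isBounded (mem_univ a) (mem_univ b)
  refine ⟨n, hn, fun m hm k => ?_⟩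
  have hm0 : 0 < m := lt_of_lt_of_le hn hm
  set x := altSeq f n p q with hx
  have hsum : (∑ i ∈ Finset.range m, dist (f (x (i + k))) (x (i + k + 1)))
      ≤ D * (((m / n : ℕ) : ℝ) + 2) := by
    calc (∑ i ∈ Finset.range m, dist (f (x (i + k))) (x (i + k + 1)))
        ≤ ∑ i ∈ Finset.range m, (if n ∣ (i + k + 1) then D else 0) := by
          refine Finset.sum_le_sum fun i _ => ?_
          by_cases hd : n ∣ (i + k + 1)
          · rw [if_pos hd]; exact hD _ _
          · rw [if_neg hd]
            have h2 := altSeq_step f n p q hn (i := i + k) hd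
            rw [hx, h2, dist_self]
      _ = (((Finset.range m).filter (fun i => n ∣ (i + k + 1))).card : ℝ) * D := by
          rw [← Finset.sum_filter, Finset.sum_const, nsmul_eq_mul]
      _ ≤ D * (((m / n : ℕ) : ℝ) + 2) := by
          rw [mul_comm]
          refine mul_le_mul_of_nonneg_left ?_ hD0
          have := card_dvd_window n m k hn
          exact_mod_cast by exact_mod_cast (by push_cast; exact_mod_cast Nat.cast_le.2 this :
            (((Finset.range m).filter (fun i => n ∣ (i + k + 1))).card : ℝ) ≤ ((m / n : ℕ) : ℝ) + 2)
  rw [div_lt_iff₀ (by exact_mod_cast hm0)]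
  have hnm : (n : ℝ) ≤ m := by exact_mod_cast hm
  have hn0 : (0 : ℝ) < n := by exact_mod_cast hn
  have hdivle : ((m / n : ℕ) : ℝ) * n ≤ (m : ℝ) := by
    have := Nat.div_mul_le_self m n
    exact_mod_cast this
  have hkey : D * (((m / n : ℕ) : ℝ) + 2) * n ≤ D * ((m : ℝ) + 2 * n) := by
    nlinarith [mul_le_mul_of_nonneg_left hdivle hD0]
  have hfin : D * ((m : ℝ) + 2 * n) < δ * m * n := by
    nlinarith [mul_lt_mul_of_pos_left hnδ (show (0:ℝ) < m by exact_mod_cast hm0),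
      mul_le_mul_of_nonneg_left hnm hD0]
  have hq : (∑ i ∈ Finset.range m, dist (f (x (i + k))) (x (i + k + 1))) * n < δ * m * n := by
    calc (∑ i ∈ Finset.range m, dist (f (x (i + k))) (x (i + k + 1))) * n
        ≤ D * (((m / n : ℕ) : ℝ) + 2) * n := by
          exact mul_le_mul_of_nonneg_right hsum (le_of_lt hn0)
      _ ≤ D * ((m : ℝ) + 2 * n) := hkey
      _ < δ * m * n := hfin
  nlinarith

open scoped Classical in
lemma exists_time (x : ℕ → Y) (y : Y) (W : Set Y) (f : Y → Y)
    (n M : ℕ) (c : ℕ) (hn : 0 < n) {β ε : ℝ} (hβ : 0 < β)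
    (hcount : ∀ k : ℕ, k * c ≤ ((Finset.range (2*k*n)).filter (fun i => x i ∈ W)).card)
    (hbad : ∀ m : ℕ, M ≤ m → (∑ i ∈ Finset.range m, dist (f^[i] y) (x i)) < ε * m)
    (hgap : 2 * ε * n / β + 1 ≤ (c : ℝ))
    (m0 : ℕ) : ∃ s, m0 ≤ s ∧ x s ∈ W ∧ dist (f^[s] y) (x s) < β := by
  set k := max M (m0 + 1) with hk
  set m := 2 * k * n with hm
  have hkM : M ≤ k := le_max_left _ _
  have hkm0 : m0 + 1 ≤ k := le_max_right _ _
  have hk1 : 1 ≤ k := by omega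
  have hmM : M ≤ m := by calc M ≤ k := hkM
                           _ ≤ 2 * k * n := by nlinarith
  set Gd := (Finset.range m).filter (fun i => x i ∈ W) with hGd
  set Bd := (Finset.range m).filter (fun i => β ≤ dist (f^[i] y) (x i)) with hBd
  have hBd_le : (Bd.card : ℝ) * β ≤ ∑ i ∈ Finset.range m, dist (f^[i] y) (x i) := by
    calc (Bd.card : ℝ) * β = ∑ _i ∈ Bd, β := by rw [Finset.sum_const, nsmul_eq_mul]
      _ ≤ ∑ i ∈ Bd, dist (f^[i] y) (x i) := by
          refine Finset.sum_le_sum fun i hi => ?_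
          exact (Finset.mem_filter.1 hi).2
      _ ≤ ∑ i ∈ Finset.range m, dist (f^[i] y) (x i) := by
          refine Finset.sum_le_sum_of_subset_of_nonneg (Finset.filter_subset _ _)
            fun i _ _ => dist_nonneg
  have hBdR : (Bd.card : ℝ) < ε * m / β := by
    rw [lt_div_iff₀ hβ]
    exact lt_of_le_of_lt hBd_le (hbad m hmM)
  have hGdR : (k : ℝ) * c ≤ Gd.card := by exact_mod_cast hcount k
  have hcards : (Bd ∪ Finset.range m0).card < Gd.card := by
    have h1 : ((Bd ∪ Finset.range m0).card : ℝ) ≤ (Bd.card : ℝ) + m0 := by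
      have := Finset.card_union_le Bd (Finset.range m0)
      calc ((Bd ∪ Finset.range m0).card : ℝ) ≤ (Bd.card + (Finset.range m0).card : ℕ) := by
            exact_mod_cast this
        _ = (Bd.card : ℝ) + m0 := by push_cast [Finset.card_range]; ring
    have h2 : ε * m / β = 2 * ε * n / β * k := by
      rw [hm]; push_cast; field_simp
    have h3 : (Bd.card : ℝ) + m0 < (k : ℝ) * c := by
      have h4 : (k : ℝ) * c ≥ (k : ℝ) * (2 * ε * n / β + 1) := by
        apply mul_le_mul_of_nonneg_left hgap (by positivity)
      have h5 : (k : ℝ) * (2 * ε * n / β + 1) = 2 * ε * n / β * k + k := by ring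
      have h6 : (m0 : ℝ) < k := by exact_mod_cast hkm0
      rw [h2] at hBdR
      linarith
    exact_mod_cast lt_of_le_of_lt h1 (lt_of_lt_of_le h3 hGdR)
  have hnonempty : (Gd \ (Bd ∪ Finset.range m0)).Nonempty := by
    rw [← Finset.card_pos]
    have := Finset.card_le_card_sdiff_add_card (s := Gd) (t := Bd ∪ Finset.range m0)
    omega
  obtain ⟨s, hs⟩ := hnonempty
  rw [Finset.mem_sdiff] at hs
  obtain ⟨hsGd, hsnot⟩ := hs
  rw [Finset.mem_union, not_or] at hsnot
  obtain ⟨hsBd, hsm0⟩ := hsnot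
  rw [hGd, Finset.mem_filter] at hsGd
  refine ⟨s, ?_, hsGd.2, ?_⟩
  · simpa using hsm0
  · by_contra hcon
    exact hsBd (Finset.mem_filter.2 ⟨hsGd.1, not_lt.1 hcon⟩)

set_option maxHeartbeats 1000000 in
open scoped Classical in
lemma topTransitive_of_avgShadowing {Y : Type*} [MetricSpace Y] [CompactSpace Y]
    [MeasurableSpace Y] [BorelSpace Y]
    (f : Y → Y) (hf : Continuous f) (μ : Measure Y) (hμ : InvariantProb f μ)
    (hfull : FullSupport μ) (h : AvgShadowing f) : TopTransitive f := by
  obtain ⟨hprob, hinv⟩ := hμ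
  haveI := hprob
  intro U V hU hV hUne hVne
  obtain ⟨u, hu⟩ := hUne
  obtain ⟨v, hv⟩ := hVne
  obtain ⟨ru, hru, hruU⟩ := Metric.isOpen_iff.1 hU u hu
  obtain ⟨rv, hrv, hrvV⟩ := Metric.isOpen_iff.1 hV v hv
  set r := min ru rv with hrdef
  have hr : 0 < r := lt_min hru hrv
  set β := r / 2 with hβdef
  have hβ : 0 < β := by positivity
  set Wu := ball u β with hWu
  set Wv := ball v β with hWv
  have haWu : 0 < μ Wu := hfull _ isOpen_ball (nonempty_ball.2 hβ)
  have haWv : 0 < μ Wv := hfull _ isOpen_ball (nonempty_ball.2 hβ)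
  set a := (μ Wu).toReal with ha_def
  set b := (μ Wv).toReal with hb_def
  have ha : 0 < a := ENNReal.toReal_pos (ne_of_gt haWu) (measure_ne_top μ _)
  have hb : 0 < b := ENNReal.toReal_pos (ne_of_gt haWv) (measure_ne_top μ _)
  set c := min a b with hc_def
  have hc : 0 < c := lt_min ha hb
  set ε := β * c / 8 with hε_def
  have hε : 0 < ε := by positivity
  obtain ⟨δ, hδ, hshad⟩ := h ε hε
  set D := Metric.diam (Set.univ : Set Y) with hD_def
  have hD0 : 0 ≤ D := Metric.diam_nonneg
  set n := max (⌈3*D/δ⌉₊ + 1) (⌈4/c⌉₊ + 1) with hn_def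
  have hn : 0 < n := by
    rw [hn_def]; positivity
  have hnR1 : 3 * D / δ < (n : ℝ) := by
    have h1 : (3*D/δ) ≤ (⌈3*D/δ⌉₊ : ℝ) := Nat.le_ceil _
    have h2 : (⌈3*D/δ⌉₊ + 1 : ℕ) ≤ n := le_max_left _ _
    have h3 : ((⌈3*D/δ⌉₊ + 1 : ℕ) : ℝ) ≤ (n : ℝ) := by exact_mod_cast h2
    push_cast at h3
    linarith
  have hn1 : 3 * D < δ * n := by
    rw [div_lt_iff₀ hδ] at hnR1
    linarith
  have hnR2 : 4 / c < (n : ℝ) := by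
    have h1 : (4/c) ≤ (⌈4/c⌉₊ : ℝ) := Nat.le_ceil _
    have h2 : (⌈4/c⌉₊ + 1 : ℕ) ≤ n := le_max_right _ _
    have h3 : ((⌈4/c⌉₊ + 1 : ℕ) : ℝ) ≤ (n : ℝ) := by exact_mod_cast h2
    push_cast at h3
    linarith
  have hn2 : 4 < (n : ℝ) * c := by
    rw [div_lt_iff₀ hc] at hnR2
    linarith
  -- good points
  obtain ⟨p, hp⟩ := exists_good_point' f hf μ hinv (measurableSet_ball (x := u) (ε := β)) n
  obtain ⟨q, hq⟩ := exists_good_point' f hf μ hinv (measurableSet_ball (x := v) (ε := β)) n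
  set cp := ((Finset.range n).filter (fun t => f^[t] p ∈ Wu)).card with hcp_def
  set cq := ((Finset.range n).filter (fun t => f^[t] q ∈ Wv)).card with hcq_def
  have hpc : (n : ℝ) * a - 1 ≤ (cp : ℝ) := hp
  have hqc : (n : ℝ) * b - 1 ≤ (cq : ℝ) := hq
  have hca : c ≤ a := min_le_left _ _
  have hcb : c ≤ b := min_le_right _ _
  have hnc_a : 4 < (n : ℝ) * a := by nlinarith [Nat.cast_nonneg (α := ℝ) n]
  have hnc_b : 4 < (n : ℝ) * b := by nlinarith [Nat.cast_nonneg (α := ℝ) n]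
  -- the pseudo-orbit and its shadow
  set x := altSeq f n p q with hx_def
  have hPO : AvgPseudoOrbit f δ x := altSeq_avgPO f n p q hn hδ hn1
  obtain ⟨y, hy⟩ := hshad x hPO
  -- extract the eventual bound from the limsup
  have hD : ∀ w z : Y, dist w z ≤ D := fun w z =>
    Metric.dist_le_diam_of_mem isCompact_univ.isBounded (mem_univ w) (mem_univ z)
  have hbdd : IsBoundedUnder (· ≤ ·) atTop
      (fun m : ℕ => (∑ i ∈ Finset.range m, dist (f^[i] y) (x i)) / m) := by
    refine isBoundedUnder_of ⟨D, fun m => ?_⟩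
    rcases Nat.eq_zero_or_pos m with hm | hm
    · subst hm; simpa using hD0
    · rw [div_le_iff₀ (by exact_mod_cast hm)]
      calc (∑ i ∈ Finset.range m, dist (f^[i] y) (x i))
          ≤ ∑ _i ∈ Finset.range m, D := Finset.sum_le_sum fun i _ => hD _ _
        _ = m * D := by rw [Finset.sum_const, Finset.card_range, nsmul_eq_mul]
        _ = D * m := by ring
  have hev := eventually_lt_of_limsup_lt hy hbdd
  obtain ⟨M, hM⟩ := eventually_atTop.1 hev
  have hbad : ∀ m : ℕ, max M 1 ≤ m →
      (∑ i ∈ Finset.range m, dist (f^[i] y) (x i)) < ε * m := by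
    intro m hm
    have hm1 : 1 ≤ m := le_trans (le_max_right _ _) hm
    have h1 := hM m (le_trans (le_max_left _ _) hm)
    rw [div_lt_iff₀ (by exact_mod_cast hm1)] at h1
    linarith
  -- gap bounds
  have hgap_gen : ∀ (e : ℝ), c ≤ e → 4 < (n:ℝ) * e → ((n : ℝ) * e - 1 ≤ (2*ε*n/β + 1) + ((n:ℝ)*e - 2 - 2*ε*n/β)) := by
    intro e _ _; ring_nf; linarith
  have heβ : 2 * ε * n / β = c * n / 4 := by
    rw [hε_def]; field_simp; ring
  have hgap_u : 2 * ε * n / β + 1 ≤ (cp : ℝ) := by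
    rw [heβ]
    nlinarith [mul_le_mul_of_nonneg_left hca (Nat.cast_nonneg (α := ℝ) n), hpc, hnc_a]
  have hgap_v : 2 * ε * n / β + 1 ≤ (cq : ℝ) := by
    rw [heβ]
    nlinarith [mul_le_mul_of_nonneg_left hcb (Nat.cast_nonneg (α := ℝ) n), hqc, hnc_b]
  have hcount_u : ∀ k : ℕ, k * cp ≤
      ((Finset.range (2*k*n)).filter (fun i => x i ∈ Wu)).card := by
    intro k
    rw [hcp_def, hx_def]
    exact altSeq_count_even f n p q hn Wu k
  have hcount_v : ∀ k : ℕ, k * cq ≤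
      ((Finset.range (2*k*n)).filter (fun i => x i ∈ Wv)).card := by
    intro k
    rw [hcq_def, hx_def]
    exact altSeq_count_odd f n p q hn Wv k
  have hrru : r ≤ ru := min_le_left _ _
  have hrrv : r ≤ rv := min_le_right _ _
  clear_value r β Wu Wv a b c ε D n cp cq x
  -- find the two times
  obtain ⟨s, -, hsW, hsd⟩ := exists_time x y Wu f n (max M 1) cp hn hβ
    hcount_u hbad hgap_u 0
  obtain ⟨t, hts, htW, htd⟩ := exists_time x y Wv f n (max M 1) cq hn hβ
    hcount_v hbad hgap_v (s + 1)
  -- conclude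
  have hsU : f^[s] y ∈ U := by
    apply hruU
    rw [mem_ball]
    have h1 : dist (x s) u < β := by rwa [hWu, mem_ball] at hsW
    calc dist (f^[s] y) u ≤ dist (f^[s] y) (x s) + dist (x s) u := dist_triangle _ _ _
      _ < β + β := add_lt_add hsd h1
      _ = r := by rw [hβdef]; ring
      _ ≤ ru := hrru
  have htV : f^[t] y ∈ V := by
    apply hrvV
    rw [mem_ball]
    have h1 : dist (x t) v < β := by rwa [hWv, mem_ball] at htW
    calc dist (f^[t] y) v ≤ dist (f^[t] y) (x t) + dist (x t) v := dist_triangle _ _ _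
      _ < β + β := add_lt_add htd h1
      _ = r := by rw [hβdef]; ring
      _ ≤ rv := hrrv
  refine ⟨t - s, by omega, f^[t] y, ⟨f^[s] y, hsU, ?_⟩, htV⟩
  rw [← Function.iterate_add_apply]
  congr 1
  omega

end Aux

section ProdAux

variable {X : Type*} [MetricSpace X] [CompactSpace X] [MeasurableSpace X] [BorelSpace X]

lemma invariantProb_prod (f : X → X) (hf : Continuous f) (μ : Measure X)
    (hμ : InvariantProb f μ) : InvariantProb (Prod.map f f) (μ.prod μ) := by
  obtain ⟨hprob, hinv⟩ := hμ
  haveI := hprob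
  have hmap : μ.map f = μ := by
    ext B hB
    rw [Measure.map_apply hf.measurable hB]
    exact hinv B hB
  refine ⟨by infer_instance, fun B hB => ?_⟩
  have hpm : (μ.prod μ).map (Prod.map f f) = μ.prod μ := by
    rw [← Measure.map_prod_map _ _ hf.measurable hf.measurable, hmap]
  conv_rhs => rw [← hpm]
  rw [Measure.map_apply (hf.measurable.prodMap hf.measurable) hB]

lemma fullSupport_prod (μ : Measure X) [SFinite μ] (hfull : FullSupport μ) :
    FullSupport (μ.prod μ) := by
  intro W hW hWne
  obtain ⟨⟨w1, w2⟩, hw⟩ := hWne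
  obtain ⟨s, t, hs, ht, hw1, hw2, hst⟩ := isOpen_prod_iff.1 hW w1 w2 hw
  calc (0 : ENNReal) < μ s * μ t :=
        ENNReal.mul_pos (ne_of_gt (hfull s hs ⟨w1, hw1⟩)) (ne_of_gt (hfull t ht ⟨w2, hw2⟩))
    _ = (μ.prod μ) (s ×ˢ t) := (Measure.prod_prod s t).symm
    _ ≤ (μ.prod μ) W := measure_mono hst

lemma avgSeq_bounded {Z : Type*} [MetricSpace Z] [CompactSpace Z] (g : Z → Z)
    (w : ℕ → Z) (y : Z) :
    IsBoundedUnder (· ≤ ·) atTop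
      (fun m : ℕ => (∑ i ∈ Finset.range m, dist (g^[i] y) (w i)) / m) := by
  set D := Metric.diam (Set.univ : Set Z) with hD_def
  have hD0 : 0 ≤ D := Metric.diam_nonneg
  have hD : ∀ a b : Z, dist a b ≤ D := fun a b =>
    Metric.dist_le_diam_of_mem isCompact_univ.isBounded (mem_univ a) (mem_univ b)
  refine isBoundedUnder_of ⟨D, fun m => ?_⟩
  rcases Nat.eq_zero_or_pos m with hm | hm
  · subst hm; simpa using hD0
  · rw [div_le_iff₀ (by exact_mod_cast hm)]
    calc (∑ i ∈ Finset.range m, dist (g^[i] y) (w i))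
        ≤ ∑ _i ∈ Finset.range m, D := Finset.sum_le_sum fun i _ => hD _ _
      _ = m * D := by rw [Finset.sum_const, Finset.card_range, nsmul_eq_mul]
      _ = D * m := by ring

lemma avgShadowing_prod (f : X → X) (h : AvgShadowing f) :
    AvgShadowing (Prod.map f f) := by
  intro ε hε
  obtain ⟨δ, hδ, hs⟩ := h (ε / 3) (by positivity)
  refine ⟨δ, hδ, fun z hz => ?_⟩
  obtain ⟨N, hN, hzz⟩ := hz
  have hpo1 : AvgPseudoOrbit f δ (fun i => (z i).1) := by
    refine ⟨N, hN, fun m hm k => ?_⟩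
    refine lt_of_le_of_lt ?_ (hzz m hm k)
    refine div_le_div_of_nonneg_right (Finset.sum_le_sum fun i _ => ?_) (Nat.cast_nonneg m)
    rw [Prod.dist_eq]
    exact le_sup_left
  have hpo2 : AvgPseudoOrbit f δ (fun i => (z i).2) := by
    refine ⟨N, hN, fun m hm k => ?_⟩
    refine lt_of_le_of_lt ?_ (hzz m hm k)
    refine div_le_div_of_nonneg_right (Finset.sum_le_sum fun i _ => ?_) (Nat.cast_nonneg m)
    rw [Prod.dist_eq]
    exact le_sup_right
  obtain ⟨y1, hy1⟩ := hs _ hpo1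
  obtain ⟨y2, hy2⟩ := hs _ hpo2
  refine ⟨(y1, y2), ?_⟩
  unfold ShadowedInAvg at hy1 hy2 ⊢
  set u1 : ℕ → ℝ := fun m => (∑ i ∈ Finset.range m, dist (f^[i] y1) ((z i).1)) / m with hu1
  set u2 : ℕ → ℝ := fun m => (∑ i ∈ Finset.range m, dist (f^[i] y2) ((z i).2)) / m with hu2
  set u : ℕ → ℝ := fun m =>
    (∑ i ∈ Finset.range m, dist ((Prod.map f f)^[i] (y1, y2)) (z i)) / m with hu
  have hptw : ∀ m : ℕ, u m ≤ u1 m + u2 m := by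
    intro m
    rw [hu, hu1, hu2]
    simp only
    rw [← add_div, ← Finset.sum_add_distrib]
    refine div_le_div_of_nonneg_right (Finset.sum_le_sum fun i _ => ?_) (Nat.cast_nonneg m)
    rw [Prod.map_iterate, Prod.dist_eq]
    exact sup_le (le_add_of_nonneg_right dist_nonneg) (le_add_of_nonneg_left dist_nonneg)
  have hev1 := eventually_lt_of_limsup_lt hy1 (avgSeq_bounded f (fun i => (z i).1) y1)
  have hev2 := eventually_lt_of_limsup_lt hy2 (avgSeq_bounded f (fun i => (z i).2) y2)
  have hev : ∀ᶠ m in atTop, u m ≤ 2 * ε / 3 := by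
    filter_upwards [hev1, hev2] with m h1 h2
    have := hptw m
    linarith
  have hcob : IsCoboundedUnder (· ≤ ·) atTop u :=
    isCoboundedUnder_le_of_le atTop (x := 0) fun m => by
      rw [hu]
      positivity
  calc limsup u atTop ≤ 2 * ε / 3 := limsup_le_of_le hcob hev
    _ < ε := by linarith
  

end ProdAux

/-- A compact system with the average shadowing property and a
fully supported invariant measure is topologically weakly mixing. -/
theorem avgShadowing_fullMeasure_weaklyMixing
    {X : Type*} [MetricSpace X] [CompactSpace X] [MeasurableSpace X] [BorelSpace X]
    (f : X → X) (hf : Continuous f)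
    (μ : Measure X) (hμ : InvariantProb f μ) (hfull : FullSupport μ)
    (h : AvgShadowing f) : WeaklyMixing f := by
  haveI : IsProbabilityMeasure μ := hμ.1
  exact topTransitive_of_avgShadowing (Prod.map f f) (hf.prodMap hf) (μ.prod μ)
    (invariantProb_prod f hf μ hμ) (fullSupport_prod μ hfull) (avgShadowing_prod f h)
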